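/- Let U ⊆ ℝ^n_+ with 0 ∈ U, let g : ℝ^n → ℝ satisfy g(0) = 0, and suppose g attains its minimum over U at some point of U. Then the lifted ℓ1 regularization is monotone decreasing in the parameter α: for all α_1 > α_2 > 0 and every x ∈ ℝ^n, F^U_{g,α_1}(x) ≤ F^U_{g,α_2}(x), provided the infimum defining F^U_{g,α_2}(x) is attained. -/

import Mathlib

/-- The lifted ℓ1 regularization `F^U_{g,α}(x) = inf_{u ∈ U} (⟨u, |x|⟩ + α g(u))`. -/
noncomputable def liftedL1 {n : ℕ} (U : Set (Fin n → ℝ)) (g : (Fin n → ℝ) → ℝ) (α : ℝ)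
    (x : Fin n → ℝ) : EReal :=
  ⨅ u ∈ U, (((∑ i, u i * |x i|) + α * g u : ℝ) : EReal)

/-- If `U ⊆ ℝ^n_+` contains `0`, `g(0) = 0` and `g` attains its minimum over `U`, then the
lifted ℓ1 regularization is monotone decreasing in `α`: for `α₁ > α₂ > 0`,
`F^U_{g,α₁}(x) ≤ F^U_{g,α₂}(x)`, provided the infimum defining `F^U_{g,α₂}(x)` is attained. -/
theorem liftedL1_antitone_in_alpha {n : ℕ} (U : Set (Fin n → ℝ))
    (hU : ∀ u ∈ U, ∀ i, 0 ≤ u i) (h0U : (0 : Fin n → ℝ) ∈ U)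
    (g : (Fin n → ℝ) → ℝ) (hg0 : g 0 = 0)
    (hgmin : ∃ u₀ ∈ U, ∀ u ∈ U, g u₀ ≤ g u)
    (α₁ α₂ : ℝ) (h₁₂ : α₁ > α₂) (h₂ : α₂ > 0) (x : Fin n → ℝ)
    (hattain : ∃ u ∈ U,
      liftedL1 U g α₂ x = (((∑ i, u i * |x i|) + α₂ * g u : ℝ) : EReal)) :
    liftedL1 U g α₁ x ≤ liftedL1 U g α₂ x := by
  obtain ⟨u, huU, hu⟩ := hattain
  rw [hu]
  have hle : liftedL1 U g α₂ x ≤ (((∑ i, u i * |x i|) + α₂ * g u : ℝ) : EReal) := le_of_eq hu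
  have h0le : (0:ℝ) ≤ ∑ i, u i * |x i| :=
    Finset.sum_nonneg fun i _ => mul_nonneg (hU u huU i) (abs_nonneg _)
  have hgu : g u ≤ 0 := by
    by_contra h
    push_neg at h
    have h0 : liftedL1 U g α₂ x ≤ (((∑ i, (0:Fin n → ℝ) i * |x i|) + α₂ * g 0 : ℝ) : EReal) :=
      biInf_le _ h0U
    simp [hg0] at h0
    rw [hu] at h0
    have : (0:ℝ) < (∑ i, u i * |x i|) + α₂ * g u := by positivity
    exact absurd (EReal.coe_le_coe_iff.mp h0) (not_le.mpr this)
  calc liftedL1 U g α₁ x ≤ (((∑ i, u i * |x i|) + α₁ * g u : ℝ) : EReal) := biInf_le _ huU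
    _ ≤ _ := by
        apply EReal.coe_le_coe_iff.mpr
        exact add_le_add_right (mul_le_mul_of_nonpos_right (le_of_lt h₁₂) hgu) _
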